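/- Certification by 3-opt moves: Let pq be an edge, r ∈ V \ {p,q}, and R = {x : rx ∈ E and rx compatible with pq} ⊆ R_p ∪ R_q for sets R_p, R_q. If for each i ∈ {p,q} and all x, y ∈ R_i we have l(pq) + l(rx) + l(ry) > l(pr) + l(rq) + l(xy), then in every optimum tour containing pq the two tour-neighbors of r do not both lie in R_p, and do not both lie in R_q (i.e., R_p, R_q certify that r is potential with respect to pq). -/

import Mathlib

/-- A tour (Hamiltonian cycle), encoded as a cyclic permutation with no fixed points. -/
def IsTour {V : Type*} [Fintype V] (σ : Equiv.Perm V) : Prop :=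
  σ.IsCycle ∧ ∀ v : V, σ v ≠ v

/-- The length of a tour. -/
noncomputable def tourLength {V : Type*} [Fintype V] (l : V → V → ℝ)
    (σ : Equiv.Perm V) : ℝ :=
  ∑ v, l v (σ v)

/-- An optimum tour: a tour of minimum length. -/
def IsOptimumTour {V : Type*} [Fintype V] (l : V → V → ℝ) (σ : Equiv.Perm V) : Prop :=
  IsTour σ ∧ ∀ τ : Equiv.Perm V, IsTour τ → tourLength l σ ≤ tourLength l τ

/-- The edge `{a,b}` belongs to the tour `σ`. -/
def edgeIn {V : Type*} [Fintype V] (σ : Equiv.Perm V) (a b : V) : Prop :=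
  σ a = b ∨ σ b = a

/-- Edges `pq` and `xy` are compatible. -/
def Compatible {V : Type*} (l : V → V → ℝ) (p q x y : V) : Prop :=
  l p q + l x y ≤ max (l p x + l q y) (l p y + l q x)

/-- **Certification by 3-opt moves.** If `R ⊆ R_p ∪ R_q` and for each `i ∈ {p,q}`
and all `x, y ∈ R_i` we have `l(pq) + l(rx) + l(ry) > l(pr) + l(rq) + l(xy)`, then
in every optimum tour containing `pq` the tour-neighbours of `r` do not both lie in
`R_p`, and do not both lie in `R_q`. -/
lemma three_opt_aux {V : Type*} [Fintype V] (l : V → V → ℝ) (σ : Equiv.Perm V)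
    (hopt : IsOptimumTour l σ) (p r : V) (hrp : r ≠ p) (hrq : r ≠ σ p)
    (hlt : l p r + l r (σ p) + l (σ⁻¹ r) (σ r) < l p (σ p) + l r (σ r) + l (σ⁻¹ r) r) :
    False := by
  classical
  obtain ⟨⟨hcyc, hfix⟩, hmin⟩ := hopt
  set q := σ p with hq
  set x := σ r with hx
  set y := σ⁻¹ r with hy
  have hyr : σ y = r := by simp [hy]
  have hpq : p ≠ q := fun h => hfix p h.symm
  have hyne_r : y ≠ r := fun h => hfix r (h ▸ hyr)
  have hyp : y ≠ p := fun h => hrq (by rw [← hyr, h, ← hq])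
  have hxr : x ≠ r := fun h => hfix r h
  have hxq : x ≠ q := fun h => hrp (σ.injective (by rw [hx] at h; rw [h, ← hq]))
  -- x ≠ y
  have hxy : x ≠ y := by
    intro h
    have h2 : σ (σ r) = r := by rw [← hx, h, hyr]
    have hsq : σ ^ 2 = 1 := by
      refine hcyc.pow_eq_one_iff.2 ⟨r, hfix r, ?_⟩
      simp [pow_two, Equiv.Perm.mul_apply, h2]
    obtain ⟨n, hn⟩ := hcyc.exists_pow_eq (hfix r) (hfix p)
    rcases Nat.even_or_odd n with ⟨m, hm⟩ | ⟨m, hm⟩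
    · rw [hm, ← two_mul, pow_mul, hsq, one_pow] at hn
      simp only [Equiv.Perm.one_apply] at hn
      exact hrp hn
    · rw [hm, pow_succ, Equiv.Perm.mul_apply, pow_mul, hsq, one_pow] at hn
      simp only [Equiv.Perm.one_apply] at hn
      apply hrq
      rw [hq, ← hn]
      exact h2.symm
  -- the 3-opt move
  set c : Equiv.Perm V := Equiv.swap p y * Equiv.swap y r with hc
  set τ : Equiv.Perm V := σ * c with hτ
  have hcp : c p = y := by
    rw [hc, Equiv.Perm.mul_apply, Equiv.swap_apply_of_ne_of_ne (Ne.symm hyp) (Ne.symm hrp),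
      Equiv.swap_apply_left]
  have hcy : c y = r := by
    rw [hc, Equiv.Perm.mul_apply, Equiv.swap_apply_left,
      Equiv.swap_apply_of_ne_of_ne hrp (Ne.symm hyne_r)]
  have hcr : c r = p := by
    rw [hc, Equiv.Perm.mul_apply, Equiv.swap_apply_right, Equiv.swap_apply_right]
  have hcother : ∀ v, v ≠ p → v ≠ y → v ≠ r → c v = v := by
    intro v h1 h2 h3
    rw [hc, Equiv.Perm.mul_apply, Equiv.swap_apply_of_ne_of_ne h2 h3,
      Equiv.swap_apply_of_ne_of_ne h1 h2]
  have hτp : τ p = r := by simp [hτ, Equiv.Perm.mul_apply, hcp, hyr]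
  have hτy : τ y = x := by simp [hτ, Equiv.Perm.mul_apply, hcy, hx]
  have hτr : τ r = q := by simp [hτ, Equiv.Perm.mul_apply, hcr, hq]
  have hτother : ∀ v, v ≠ p → v ≠ y → v ≠ r → τ v = σ v := by
    intro v h1 h2 h3
    simp [hτ, Equiv.Perm.mul_apply, hcother v h1 h2 h3]
  -- τ has no fixed points
  have hτfix : ∀ v, τ v ≠ v := by
    intro v
    by_cases h1 : v = p
    · rw [h1, hτp]; exact hrp
    by_cases h2 : v = y
    · rw [h2, hτy]; exact hxy
    by_cases h3 : v = r
    · rw [h3, hτr]; exact fun h => hrq h.symm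
    · rw [hτother v h1 h2 h3]; exact hfix v
  -- τ is a cycle
  have key : ∀ k : ℕ, τ.SameCycle p ((σ ^ k) p) := by
    intro k
    induction k using Nat.strong_induction_on with
    | _ k ih =>
      match k with
      | 0 => simpa using Equiv.Perm.SameCycle.refl τ p
      | Nat.succ k =>
        have hstep : (σ ^ (k+1)) p = σ ((σ ^ k) p) := by
          rw [pow_succ', Equiv.Perm.mul_apply]
        set v := (σ ^ k) p with hv
        by_cases h1 : v = p
        · rw [hstep, h1, ← hq]
          exact ⟨2, by
            show (τ ^ (2:ℤ)) p = q
            rw [show (2:ℤ) = ((2:ℕ):ℤ) by norm_num, zpow_natCast, pow_two,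
              Equiv.Perm.mul_apply, hτp, hτr]⟩
        by_cases h2 : v = y
        · rw [hstep, h2, hyr]
          exact ⟨1, by rw [zpow_one]; exact hτp⟩
        by_cases h3 : v = r
        · -- then k ≥ 1 and (σ^(k-1)) p = y
          match k, hv with
          | 0, hv => exact absurd (show r = p by rw [← h3, hv, pow_zero, Equiv.Perm.one_apply]) hrp
          | Nat.succ m, hv =>
            have hm : (σ ^ m) p = y := by
              have : σ ((σ ^ m) p) = r := by
                rw [← Equiv.Perm.mul_apply, ← pow_succ', ← hv, h3]
              rw [hy, ← this, Equiv.Perm.inv_def, Equiv.symm_apply_apply]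
            have := ih m (by omega)
            rw [hm] at this
            refine this.trans ⟨1, ?_⟩
            rw [hstep, h3, ← hx, zpow_one, hτy]
        · have := ih k (by omega)
          rw [← hv] at this
          refine this.trans ⟨1, ?_⟩
          rw [hstep, zpow_one, hτother v h1 h2 h3]
  have hτcyc : τ.IsCycle := by
    refine ⟨p, hτfix p, fun b _ => ?_⟩
    obtain ⟨a, ha, hall⟩ := hcyc
    have h1 : σ.SameCycle p b := ((hall (hfix p)).symm).trans (hall (hfix b))
    obtain ⟨i, -, hi⟩ := h1.exists_pow_eq'
    rw [← hi]
    exact key i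
  -- length comparison
  have hlen : tourLength l τ < tourLength l σ := by
    have hsub : ({p, y, r} : Finset V) ⊆ Finset.univ := Finset.subset_univ _
    have hpm : p ∉ ({y, r} : Finset V) := by simp [hyp.symm, hrp.symm, Ne.symm]
    have hym : y ∉ ({r} : Finset V) := by simp [hyne_r]
    have hsums : ∀ g : V → ℝ, ∑ v ∈ ({p, y, r} : Finset V), g v = g p + (g y + g r) := by
      intro g
      rw [Finset.sum_insert hpm, Finset.sum_insert hym, Finset.sum_singleton]
    have hcompl : ∑ v ∈ Finset.univ \ ({p, y, r} : Finset V), l v (τ v)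
        = ∑ v ∈ Finset.univ \ ({p, y, r} : Finset V), l v (σ v) := by
      refine Finset.sum_congr rfl fun v hv => ?_
      simp only [Finset.mem_sdiff, Finset.mem_insert, Finset.mem_singleton] at hv
      rw [hτother v (by tauto) (by tauto) (by tauto)]
    have e1 : tourLength l τ
        = ∑ v ∈ Finset.univ \ ({p, y, r} : Finset V), l v (τ v)
          + ∑ v ∈ ({p, y, r} : Finset V), l v (τ v) :=
      (Finset.sum_sdiff hsub).symm
    have e2 : tourLength l σ
        = ∑ v ∈ Finset.univ \ ({p, y, r} : Finset V), l v (σ v)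
          + ∑ v ∈ ({p, y, r} : Finset V), l v (σ v) :=
      (Finset.sum_sdiff hsub).symm
    rw [e1, e2, hcompl, hsums, hsums, hτp, hτy, hτr, ← hq, ← hx, hyr]
    linarith [hlt]
  exact absurd (hmin τ ⟨hτcyc, hτfix⟩) (not_le.2 hlen)

theorem certification_by_three_opt {V : Type*} [Fintype V]
    (l : V → V → ℝ) (hsymm : ∀ a b, l a b = l b a) (hnonneg : ∀ a b, 0 ≤ l a b)
    (E : V → V → Prop) (hEsymm : ∀ a b, E a b → E b a)
    (hE : ∀ σ : Equiv.Perm V, IsOptimumTour l σ → ∀ v : V, E v (σ v))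
    (p q r : V) (hpqE : E p q) (hrp : r ≠ p) (hrq : r ≠ q)
    (Rp Rq : Set V)
    (hcover : ∀ x : V, E r x → Compatible l p q r x → x ∈ Rp ∪ Rq)
    (hRp : ∀ x ∈ Rp, ∀ y ∈ Rp, l p r + l r q + l x y < l p q + l r x + l r y)
    (hRq : ∀ x ∈ Rq, ∀ y ∈ Rq, l p r + l r q + l x y < l p q + l r x + l r y) :
    ∀ σ : Equiv.Perm V, IsOptimumTour l σ → edgeIn σ p q →
      ¬(σ r ∈ Rp ∧ σ⁻¹ r ∈ Rp) ∧ ¬(σ r ∈ Rq ∧ σ⁻¹ r ∈ Rq) := by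
  intro σ hopt hedge
  constructor
  · rintro ⟨hx1, hy1⟩
    rcases hedge with h | h
    · exact three_opt_aux l σ hopt p r hrp (by rw [h]; exact hrq)
        (by rw [h]; have := hRp _ hy1 _ hx1; linarith [hsymm r (σ⁻¹ r)])
    · exact three_opt_aux l σ hopt q r hrq (by rw [h]; exact hrp)
        (by rw [h]
            have := hRp _ hy1 _ hx1
            linarith [hsymm r (σ⁻¹ r), hsymm p q, hsymm q r, hsymm r p])
  · rintro ⟨hx1, hy1⟩
    rcases hedge with h | h
    · exact three_opt_aux l σ hopt p r hrp (by rw [h]; exact hrq)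
        (by rw [h]; have := hRq _ hy1 _ hx1; linarith [hsymm r (σ⁻¹ r)])
    · exact three_opt_aux l σ hopt q r hrq (by rw [h]; exact hrp)
        (by rw [h]
            have := hRq _ hy1 _ hx1
            linarith [hsymm r (σ⁻¹ r), hsymm p q, hsymm q r, hsymm r p])
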